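/- Let u, v : ℤ → {0,1}. Suppose (1) u is balanced: for all integers p, p' and all r ≥ 0, the number of indices i with p ≤ i ≤ p + r and u(i) = 0 differs from the number of indices i with p' ≤ i ≤ p' + r and u(i) = 0 by at most 1; and (2) every finite factor of v is also a factor of u: for all integers p ≤ q there exists an integer p' such that v(p + i) = u(p' + i) for all 0 ≤ i ≤ q − p. Then u and v are at distance at most one: for all integers p ≤ q, the number of indices i with p ≤ i ≤ q and u(i) = 0 differs from the number of indices i with p ≤ i ≤ q and v(i) = 0 by at most 1. -/

import Mathlib

/-- Bi-infinite binary words are functions `ℤ → Bool`, where `false` stands for the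
letter 0 and `true` for the letter 1.  `zeroCount u p q` is the number of indices
`i` with `p ≤ i ≤ q` and `u i = 0`, as an integer. -/
noncomputable def zeroCount (u : ℤ → Bool) (p q : ℤ) : ℤ :=
  ((Finset.Icc p q).filter (fun i => u i = false)).card

lemma zeroCount_eq_of_agree (u v : ℤ → Bool) (p p' r : ℤ)
    (h : ∀ i : ℤ, 0 ≤ i → i ≤ r → v (p + i) = u (p' + i)) :
    zeroCount v p (p + r) = zeroCount u p' (p' + r) := by
  unfold zeroCount
  congr 1
  apply Finset.card_bij' (fun i _ => i - p + p') (fun j _ => j - p' + p)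
  · intro i hi
    simp only [Finset.mem_filter, Finset.mem_Icc] at hi ⊢
    refine ⟨⟨by omega, by omega⟩, ?_⟩
    have := h (i - p) (by omega) (by omega)
    rw [show p + (i - p) = i by ring] at this
    rw [show i - p + p' = p' + (i - p) by ring, ← this]; exact hi.2
  · intro j hj
    simp only [Finset.mem_filter, Finset.mem_Icc] at hj ⊢
    refine ⟨⟨by omega, by omega⟩, ?_⟩
    have := h (j - p') (by omega) (by omega)
    rw [show p' + (j - p') = j by ring] at this
    rw [show j - p' + p = p + (j - p') by ring, this]; exact hj.2
  · intro i _; ring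
  · intro j _; ring

/-- If `u` is balanced and every finite factor of `v` is a factor of `u`, then `u` and
`v` are at distance at most one. -/
theorem balance_le_one_of_balanced_of_factors (u v : ℤ → Bool)
    (hbal : ∀ p p' : ℤ, ∀ r : ℕ,
      |zeroCount u p (p + r) - zeroCount u p' (p' + r)| ≤ 1)
    (hfac : ∀ p q : ℤ, p ≤ q → ∃ p' : ℤ,
      ∀ i : ℤ, 0 ≤ i → i ≤ q - p → v (p + i) = u (p' + i)) :
    ∀ p q : ℤ, p ≤ q → |zeroCount u p q - zeroCount v p q| ≤ 1 := by
  intro p q hpq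
  obtain ⟨p', hp'⟩ := hfac p q hpq
  obtain ⟨r, hr⟩ := Int.eq_ofNat_of_zero_le (show (0:ℤ) ≤ q - p by omega)
  have hq : q = p + (r : ℤ) := by omega
  have := zeroCount_eq_of_agree u v p p' (q - p) hp'
  rw [show p + (q - p) = q by ring] at this
  rw [this, hq]
  rw [show p' + (p + (r:ℤ) - p) = p' + (r:ℤ) by ring]
  exact hbal p p' r
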